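/- arXiv:2603.28681 — 2 statements merged into one kernel-verified Lean document; each statement's English description precedes it below -/
import Mathlib

section
/- Let K ≥ 1, let λ ≥ 0, let Q : Fin K → ℝ, let p be a probability vector on Fin K with p_a > 0 for all a, and let φ : Fin K → ℝ with Σ_a p_a φ_a = 0. Define the centered entropy-adjusted advantage A_a := (Q_a − λ log p_a) − Σ_{a'} p_{a'} (Q_{a'} − λ log p_{a'}), and define g(ε) := Σ_a p_a (1 + ε φ_a) · ( Q_a − λ · log(p_a (1 + ε φ_a)) ). Then g is differentiable at ε = 0 with g'(0) = Σ_a p_a A_a φ_a. -/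
/-- For a strictly positive probability vector `p` on `Fin K`, rewards `Q`,
`λ ≥ 0`, and a `p`-centered score `φ`, the entropy-regularized value
`g(ε) = ∑ a, p a (1 + ε φ a) (Q a - λ log (p a (1 + ε φ a)))`
is differentiable at `ε = 0` with derivative `∑ a, p a A a φ a`, where
`A` is the centered entropy-adjusted advantage. -/
theorem stmt_5 (K : ℕ) (hK : 1 ≤ K) (lam : ℝ) (hlam : 0 ≤ lam)
    (Q p : Fin K → ℝ) (hp0 : ∀ a, 0 < p a) (hp1 : ∑ a, p a = 1)
    (φ : Fin K → ℝ) (hφ : ∑ a, p a * φ a = 0)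
    (A : Fin K → ℝ)
    (hA : ∀ a, A a = (Q a - lam * Real.log (p a)) -
      ∑ a', p a' * (Q a' - lam * Real.log (p a'))) :
    HasDerivAt (fun e : ℝ =>
        ∑ a, p a * (1 + e * φ a) * (Q a - lam * Real.log (p a * (1 + e * φ a))))
      (∑ a, p a * A a * φ a) 0 := by
  have hterm : ∀ a : Fin K, HasDerivAt
      (fun e : ℝ => p a * (1 + e * φ a) * (Q a - lam * Real.log (p a * (1 + e * φ a))))
      (p a * (φ a * (Q a - lam * Real.log (p a)) - lam * φ a)) 0 := by
    intro a
    have hu : HasDerivAt (fun e : ℝ => 1 + e * φ a) (φ a) 0 := by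
      simpa using ((hasDerivAt_id (0:ℝ)).mul_const (φ a)).const_add 1
    have hin : HasDerivAt (fun e : ℝ => p a * (1 + e * φ a)) (p a * φ a) 0 :=
      hu.const_mul (p a)
    have hne : p a * (1 + 0 * φ a) ≠ 0 := by
      simp [ne_of_gt (hp0 a)]
    have hlog : HasDerivAt (fun e : ℝ => Real.log (p a * (1 + e * φ a)))
        ((p a * φ a) / (p a * (1 + 0 * φ a))) 0 := hin.log hne
    have hlog' : HasDerivAt (fun e : ℝ => Real.log (p a * (1 + e * φ a))) (φ a) 0 := by
      convert hlog using 1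
      rw [zero_mul, add_zero, mul_one, mul_div_cancel_left₀ _ (hp0 a).ne']
    have hsub : HasDerivAt (fun e : ℝ => Q a - lam * Real.log (p a * (1 + e * φ a)))
        (0 - lam * φ a) 0 := (hasDerivAt_const 0 (Q a)).sub (hlog'.const_mul lam)
    have := (hu.mul hsub).const_mul (p a)
    convert this using 1
    · rfl
    · rfl
    · funext e; rw [mul_assoc]; rfl
    · rw [zero_mul, add_zero, mul_one]
      ring
  have hsum := HasDerivAt.sum (u := Finset.univ) (fun a _ => hterm a)
  convert hsum using 1
  · rfl
  · rfl
  · funext e; simp only [Finset.sum_apply]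
  have e1 : ∑ a, p a * A a * φ a =
      ∑ a, (p a * φ a * (Q a - lam * Real.log (p a)) -
        p a * φ a * (∑ a', p a' * (Q a' - lam * Real.log (p a')))) :=
    Finset.sum_congr rfl (fun a _ => by rw [hA a]; ring)
  have e2 : ∑ a, p a * (φ a * (Q a - lam * Real.log (p a)) - lam * φ a) =
      ∑ a, (p a * φ a * (Q a - lam * Real.log (p a)) - p a * φ a * lam) :=
    Finset.sum_congr rfl (fun a _ => by ring)
  rw [e1, e2, Finset.sum_sub_distrib, Finset.sum_sub_distrib,
    ← Finset.sum_mul, ← Finset.sum_mul, hφ, zero_mul, zero_mul]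
end

section
/- Let (X, 𝒜, μ) be a probability space, let K ≥ 1, let λ ≥ 0, let Q : X → Fin K → ℝ be measurable and bounded, let δ > 0, let π : X → Fin K → ℝ be measurable with π(x) a probability vector satisfying π(x)_a ≥ δ for all x and a, and let φ : X → Fin K → ℝ be measurable and bounded with Σ_a π(x)_a φ(x)_a = 0 for μ-almost every x. Define for ε near 0: J(ε) := ∫_X Σ_a π(x)_a (1 + ε φ(x)_a) · ( Q(x)_a − λ · log( π(x)_a (1 + ε φ(x)_a) ) ) dμ(x), and define the centered entropy-adjusted advantage A(x)_a := (Q(x)_a − λ log π(x)_a) − Σ_{a'} π(x)_{a'} (Q(x)_{a'} − λ log π(x)_{a'}). Then J is differentiable at ε = 0 with J'(0) = ∫_X Σ_a π(x)_a A(x)_a φ(x)_a dμ(x). -/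
open MeasureTheory

/-- On a probability space `(X, μ)`, for a bounded measurable reward
`Q : X → Fin K → ℝ`, a measurable policy `π` bounded below by `δ > 0`, and a bounded
measurable score direction `φ` that is `π(x)`-centered for a.e. `x`, the
entropy-regularized value
`J(ε) = ∫ ∑ a, π(x)_a (1 + ε φ(x)_a) (Q(x)_a - λ log (π(x)_a (1 + ε φ(x)_a))) dμ`
is differentiable at `ε = 0` with derivative `∫ ∑ a, π(x)_a A(x)_a φ(x)_a dμ`, where `A`
is the centered entropy-adjusted advantage. -/
theorem stmt_13 {X : Type*} [MeasurableSpace X] (μ : Measure X) [IsProbabilityMeasure μ]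
    (K : ℕ) (hK : 1 ≤ K) (lam : ℝ) (hlam : 0 ≤ lam)
    (Q : X → Fin K → ℝ) (hQmeas : Measurable Q) (hQbdd : ∃ C, ∀ x a, |Q x a| ≤ C)
    (δ : ℝ) (hδ : 0 < δ)
    (π : X → Fin K → ℝ) (hπmeas : Measurable π)
    (hπδ : ∀ x a, δ ≤ π x a) (hπ1 : ∀ x, ∑ a, π x a = 1)
    (φ : X → Fin K → ℝ) (hφmeas : Measurable φ) (hφbdd : ∃ C, ∀ x a, |φ x a| ≤ C)
    (hφ0 : ∀ᵐ x ∂μ, ∑ a, π x a * φ x a = 0)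
    (A : X → Fin K → ℝ)
    (hA : ∀ x a, A x a = (Q x a - lam * Real.log (π x a)) -
      ∑ a', π x a' * (Q x a' - lam * Real.log (π x a'))) :
    HasDerivAt (fun ε : ℝ => ∫ x, (∑ a, π x a * (1 + ε * φ x a) *
        (Q x a - lam * Real.log (π x a * (1 + ε * φ x a)))) ∂μ)
      (∫ x, (∑ a, π x a * A x a * φ x a) ∂μ) 0 := by
  classical
  obtain ⟨CQ0, hCQb⟩ := hQbdd
  obtain ⟨Cf0, hCfb⟩ := hφbdd
  set CQ : ℝ := max CQ0 0 with hCQdef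
  set Cf : ℝ := max Cf0 0 with hCfdef
  have hCQ : ∀ x a, |Q x a| ≤ CQ := fun x a => (hCQb x a).trans (le_max_left _ _)
  have hCf : ∀ x a, |φ x a| ≤ Cf := fun x a => (hCfb x a).trans (le_max_left _ _)
  have hCQ0 : 0 ≤ CQ := le_max_right _ _
  have hCf0 : 0 ≤ Cf := le_max_right _ _
  have hπpos : ∀ x a, 0 < π x a := fun x a => hδ.trans_le (hπδ x a)
  have hπle1 : ∀ x a, π x a ≤ 1 := by
    intro x a
    have h := Finset.single_le_sum (f := π x) (fun i _ => (hπpos x i).le) (Finset.mem_univ a)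
    simpa [hπ1 x] using h
  set r : ℝ := 1 / (2 * (Cf + 1)) with hrdef
  have hrpos : 0 < r := by positivity
  -- basic bound on the perturbation factor on the ball
  have hfac : ∀ t ∈ Metric.ball (0 : ℝ) r, ∀ x a,
      1/2 ≤ 1 + t * φ x a ∧ 1 + t * φ x a ≤ 3/2 := by
    intro t ht x a
    have ht' : |t| < r := by simpa [Metric.mem_ball, Real.dist_eq] using ht
    have h1 : |t * φ x a| ≤ 1/2 := by
      have habs0 : 0 ≤ |t| := abs_nonneg _
      have := mul_le_mul (le_of_lt ht') (hCf x a) (abs_nonneg _) hrpos.le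
      rw [abs_mul]
      refine this.trans ?_
      rw [hrdef, div_mul_eq_mul_div, one_mul, div_le_iff₀ (by positivity)]
      nlinarith
    have h2 := abs_le.mp h1
    constructor <;> linarith [h2.1, h2.2]
  have hupos : ∀ t ∈ Metric.ball (0 : ℝ) r, ∀ x a,
      δ/2 ≤ π x a * (1 + t * φ x a) ∧ π x a * (1 + t * φ x a) ≤ 3/2 := by
    intro t ht x a
    obtain ⟨h1, h2⟩ := hfac t ht x a
    refine ⟨?_, ?_⟩
    · calc δ/2 = δ * (1/2) := by ring
      _ ≤ π x a * (1 + t * φ x a) :=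
        mul_le_mul (hπδ x a) h1 (by norm_num) (hπpos x a).le
    · calc π x a * (1 + t * φ x a) ≤ 1 * (3/2) :=
        mul_le_mul (hπle1 x a) h2 (by linarith) (by norm_num)
      _ = 3/2 := by ring
  set L : ℝ := |Real.log (δ/2)| + |Real.log (3/2)| with hLdef
  have hlogu : ∀ u : ℝ, δ/2 ≤ u → u ≤ 3/2 → |Real.log u| ≤ L := by
    intro u h1 h2
    have hδ2 : (0:ℝ) < δ/2 := by positivity
    have hl : Real.log (δ/2) ≤ Real.log u := Real.log_le_log hδ2 h1
    have hh : Real.log u ≤ Real.log (3/2) :=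
      Real.log_le_log (lt_of_lt_of_le hδ2 h1) h2
    rw [abs_le]
    have h3 := neg_abs_le (Real.log (δ/2))
    have h4 := le_abs_self (Real.log (3/2))
    have h5 := abs_nonneg (Real.log (3/2))
    have h6 := abs_nonneg (Real.log (δ/2))
    constructor <;> [skip; skip] <;> rw [hLdef] <;> [linarith; linarith]
  set B : ℝ := CQ + lam * L + lam with hBdef
  have hL0 : 0 ≤ L := by rw [hLdef]; positivity
  have hB0 : 0 ≤ B := by rw [hBdef]; positivity
  have hπa : ∀ a : Fin K, Measurable fun x => π x a := fun a => hπmeas.eval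
  have hφa : ∀ a : Fin K, Measurable fun x => φ x a := fun a => hφmeas.eval
  have hQa : ∀ a : Fin K, Measurable fun x => Q x a := fun a => hQmeas.eval
  -- measurability of F and F'
  have hFmeas : ∀ t : ℝ, AEStronglyMeasurable
      (fun x => ∑ a, π x a * (1 + t * φ x a) *
        (Q x a - lam * Real.log (π x a * (1 + t * φ x a)))) μ := by
    intro t
    refine Measurable.aestronglyMeasurable ?_
    refine Finset.measurable_sum _ fun a _ => ?_
    have h1 : Measurable fun x => π x a * (1 + t * φ x a) :=
      (hπa a).mul (measurable_const.add ((hφa a).const_mul t))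
    exact h1.mul ((hQa a).sub (h1.log.const_mul lam))
  have hF'meas : ∀ t : ℝ, AEStronglyMeasurable
      (fun x => ∑ a, π x a * φ x a *
        (Q x a - lam * Real.log (π x a * (1 + t * φ x a)) - lam)) μ := by
    intro t
    refine Measurable.aestronglyMeasurable ?_
    refine Finset.measurable_sum _ fun a _ => ?_
    have h1 : Measurable fun x => π x a * (1 + t * φ x a) :=
      (hπa a).mul (measurable_const.add ((hφa a).const_mul t))
    exact ((hπa a).mul (hφa a)).mul (((hQa a).sub (h1.log.const_mul lam)).sub measurable_const)
  -- integrability of F 0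
  have hlogπ : ∀ x a, |Real.log (π x a)| ≤ |Real.log δ| := by
    intro x a
    have h1 : Real.log δ ≤ Real.log (π x a) := Real.log_le_log hδ (hπδ x a)
    have h2 : Real.log (π x a) ≤ 0 := Real.log_nonpos (hπpos x a).le (hπle1 x a)
    rw [abs_le]
    have := neg_abs_le (Real.log δ)
    have := abs_nonneg (Real.log δ)
    constructor <;> linarith
  have hFint : Integrable (fun x => ∑ a, π x a * (1 + (0:ℝ) * φ x a) *
      (Q x a - lam * Real.log (π x a * (1 + (0:ℝ) * φ x a)))) μ := by
    refine (integrable_const (CQ + lam * |Real.log δ|)).mono' (hFmeas 0) ?_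
    refine Filter.Eventually.of_forall fun x => ?_
    simp only [zero_mul, add_zero, mul_one, Real.norm_eq_abs]
    calc |∑ a, π x a * (Q x a - lam * Real.log (π x a))|
        ≤ ∑ a, |π x a * (Q x a - lam * Real.log (π x a))| := Finset.abs_sum_le_sum_abs _ _
      _ ≤ ∑ a, π x a * (CQ + lam * |Real.log δ|) := by
          refine Finset.sum_le_sum fun a _ => ?_
          rw [abs_mul, abs_of_pos (hπpos x a)]
          refine mul_le_mul_of_nonneg_left ?_ (hπpos x a).le
          calc |Q x a - lam * Real.log (π x a)|
              ≤ |Q x a| + lam * |Real.log (π x a)| := by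
                refine (abs_sub _ _).trans ?_
                rw [abs_mul, abs_of_nonneg hlam]
            _ ≤ CQ + lam * |Real.log δ| := by
                have := mul_le_mul_of_nonneg_left (hlogπ x a) hlam
                linarith [hCQ x a]
      _ = CQ + lam * |Real.log δ| := by rw [← Finset.sum_mul, hπ1, one_mul]
  -- uniform bound on F' over the ball
  have h_bound : ∀ᵐ x ∂μ, ∀ t ∈ Metric.ball (0 : ℝ) r,
      ‖∑ a, π x a * φ x a *
        (Q x a - lam * Real.log (π x a * (1 + t * φ x a)) - lam)‖ ≤ Cf * B := by
    refine Filter.Eventually.of_forall fun x => ?_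
    intro t ht
    rw [Real.norm_eq_abs]
    calc |∑ a, π x a * φ x a * (Q x a - lam * Real.log (π x a * (1 + t * φ x a)) - lam)|
        ≤ ∑ a, |π x a * φ x a * (Q x a - lam * Real.log (π x a * (1 + t * φ x a)) - lam)| :=
          Finset.abs_sum_le_sum_abs _ _
      _ ≤ ∑ a, π x a * (Cf * B) := by
          refine Finset.sum_le_sum fun a _ => ?_
          rw [abs_mul, abs_mul, abs_of_pos (hπpos x a), mul_assoc]
          refine mul_le_mul_of_nonneg_left ?_ (hπpos x a).le
          obtain ⟨hu1, hu2⟩ := hupos t ht x a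
          have hlog := hlogu _ hu1 hu2
          refine mul_le_mul (hCf x a) ?_ (abs_nonneg _) hCf0
          calc |Q x a - lam * Real.log (π x a * (1 + t * φ x a)) - lam|
              ≤ |Q x a| + lam * |Real.log (π x a * (1 + t * φ x a))| + lam := by
                have h1 := abs_sub (Q x a - lam * Real.log (π x a * (1 + t * φ x a))) lam
                have h2 := abs_sub (Q x a) (lam * Real.log (π x a * (1 + t * φ x a)))
                rw [abs_mul, abs_of_nonneg hlam] at h2
                rw [abs_of_nonneg hlam] at h1
                linarith
            _ ≤ B := by
                rw [hBdef]
                have := mul_le_mul_of_nonneg_left hlog hlam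
                linarith [hCQ x a]
      _ = Cf * B := by rw [← Finset.sum_mul, hπ1, one_mul]
  -- differentiability pointwise
  have h_diff : ∀ᵐ x ∂μ, ∀ t ∈ Metric.ball (0 : ℝ) r,
      HasDerivAt (fun t : ℝ => ∑ a, π x a * (1 + t * φ x a) *
          (Q x a - lam * Real.log (π x a * (1 + t * φ x a))))
        (∑ a, π x a * φ x a *
          (Q x a - lam * Real.log (π x a * (1 + t * φ x a)) - lam)) t := by
    refine Filter.Eventually.of_forall fun x => ?_
    intro t ht
    refine HasDerivAt.fun_sum fun a _ => ?_
    have hu : HasDerivAt (fun t : ℝ => π x a * (1 + t * φ x a)) (π x a * φ x a) t := by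
      have h0 : HasDerivAt (fun t : ℝ => 1 + t * φ x a) (φ x a) t := by
        simpa using ((hasDerivAt_id t).mul_const (φ x a)).const_add 1
      simpa using h0.const_mul (π x a)
    have hune : π x a * (1 + t * φ x a) ≠ 0 := by
      have h1 := (hupos t ht x a).1
      have h2 : (0:ℝ) < δ/2 := by positivity
      exact (lt_of_lt_of_le h2 h1).ne'
    have hlog := hu.log hune
    have hg : HasDerivAt (fun t : ℝ => Q x a - lam * Real.log (π x a * (1 + t * φ x a)))
        (-(lam * (π x a * φ x a / (π x a * (1 + t * φ x a))))) t :=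
      (hlog.const_mul lam).const_sub (Q x a)
    have hprod := hu.fun_mul hg
    convert hprod using 1
    · rfl
    have hc : π x a * (1 + t * φ x a) * (π x a * φ x a / (π x a * (1 + t * φ x a)))
        = π x a * φ x a := by
      have hne : 1 + t * φ x a ≠ 0 := (by linarith [(hfac t ht x a).1] : (0:ℝ) < 1 + t * φ x a).ne'
      field_simp
    linear_combination lam * hc
  -- apply the dominated differentiation theorem
  have key := hasDerivAt_integral_of_dominated_loc_of_deriv_le (μ := μ) (x₀ := (0:ℝ))
      (F := fun t x => ∑ a, π x a * (1 + t * φ x a) *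
        (Q x a - lam * Real.log (π x a * (1 + t * φ x a))))
      (F' := fun t x => ∑ a, π x a * φ x a *
        (Q x a - lam * Real.log (π x a * (1 + t * φ x a)) - lam))
      (bound := fun _ => Cf * B) (Metric.ball_mem_nhds 0 hrpos)
      (Filter.Eventually.of_forall hFmeas) hFint (hF'meas 0) h_bound
      (integrable_const _) h_diff
  have heq : (∫ x, (∑ a, π x a * φ x a *
      (Q x a - lam * Real.log (π x a * (1 + (0:ℝ) * φ x a)) - lam)) ∂μ)
      = ∫ x, (∑ a, π x a * A x a * φ x a) ∂μ := by
    refine integral_congr_ae ?_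
    filter_upwards [hφ0] with x hx
    simp only [zero_mul, add_zero, mul_one, hA]
    have e1 : ∑ a, π x a * φ x a * (Q x a - lam * Real.log (π x a) - lam)
        = (∑ a, π x a * φ x a * (Q x a - lam * Real.log (π x a)))
          - lam * ∑ a, π x a * φ x a := by
      rw [Finset.mul_sum, ← Finset.sum_sub_distrib]
      refine Finset.sum_congr rfl fun a _ => by ring
    have e2 : ∑ a, π x a * ((Q x a - lam * Real.log (π x a)) -
          ∑ a', π x a' * (Q x a' - lam * Real.log (π x a'))) * φ x a
        = (∑ a, π x a * φ x a * (Q x a - lam * Real.log (π x a)))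
          - (∑ a', π x a' * (Q x a' - lam * Real.log (π x a'))) *
            ∑ a, π x a * φ x a := by
      rw [Finset.mul_sum, ← Finset.sum_sub_distrib]
      refine Finset.sum_congr rfl fun a _ => by ring
    rw [e1, e2, hx]
    ring
  exact heq ▸ key.2
end
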